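/- Let $X, Y$ be compact metric spaces, $\mu \in \mathcal{P}(X)$, $c : X \times Y \to \mathbb{R}$ continuous, and $\mathcal{F} : \mathcal{P}(Y) \to \mathbb{R}$ convex with first variation $F(\nu, y)$, meaning that for all $\nu, \rho \in \mathcal{P}(Y)$, $\lim_{t \to 0^+} \frac{\mathcal{F}(\nu + t(\rho - \nu)) - \mathcal{F}(\nu)}{t} = \int_Y F(\nu, y)\, d(\rho - \nu)(y)$. If $\nu^*$ minimizes $\nu \mapsto \mathcal{T}_c(\mu,\nu) + \mathcal{F}(\nu)$ over $\mathcal{P}(Y)$ and $\gamma^*$ is an optimal transport plan between $\mu$ and $\nu^*$ for cost $c$, then $\gamma^*$ is a Cournot-Nash equilibrium for the cost $\Phi(x,y,\nu) = c(x,y) + F(\nu,y)$, i.e., $\gamma^*(\{(x,y) : \Phi(x,y,\nu^*) = \min_{z \in Y} \Phi(x,z,\nu^*)\}) = 1$. -/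

import Mathlib

open MeasureTheory Set Filter
open scoped ENNReal NNReal Topology

private theorem cn_integrable {Z : Type*} [MetricSpace Z] [CompactSpace Z] [MeasurableSpace Z]
    [BorelSpace Z] (m : Measure Z) [IsFiniteMeasure m] {f : Z → ℝ} (hf : Continuous f) :
    Integrable f m :=
  hf.integrable_of_hasCompactSupport (IsClosed.isCompact (isClosed_tsupport f))

private theorem cn_cont_inf {X Y : Type*} [MetricSpace X] [CompactSpace X] [MetricSpace Y]
    [CompactSpace Y] [Nonempty Y] {H : X × Y → ℝ} (hH : Continuous H) :
    Continuous fun x => ⨅ z, H (x, z) := by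
  have hbdd : ∀ x : X, BddBelow (range fun z => H (x, z)) := by
    intro x
    obtain ⟨z0, -, hz0⟩ := isCompact_univ.exists_isMinOn univ_nonempty
      (hH.comp (Continuous.prodMk_right x)).continuousOn
    exact ⟨H (x, z0), by rintro r ⟨z, rfl⟩; exact isMinOn_iff.mp hz0 z trivial⟩
  have hmin : ∀ x : X, ∃ z : Y, (⨅ w, H (x, w)) = H (x, z) := by
    intro x
    obtain ⟨z0, -, hz0⟩ := isCompact_univ.exists_isMinOn univ_nonempty
      (hH.comp (Continuous.prodMk_right x)).continuousOn
    exact ⟨z0, le_antisymm (ciInf_le (hbdd x) z0)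
      (le_ciInf fun w => isMinOn_iff.mp hz0 w trivial)⟩
  rw [Metric.continuous_iff]
  intro b ε hε
  have hu : UniformContinuous H := CompactSpace.uniformContinuous_of_continuous hH
  rw [Metric.uniformContinuous_iff] at hu
  obtain ⟨δ, hδ, hδ'⟩ := hu (ε / 2) (by positivity)
  refine ⟨δ, hδ, fun a ha => ?_⟩
  have key : ∀ u v : X, dist u v < δ → (⨅ w, H (u, w)) ≤ (⨅ w, H (v, w)) + ε / 2 := by
    intro u v huv
    obtain ⟨zv, hzv⟩ := hmin v
    have hd : dist ((u, zv) : X × Y) (v, zv) < δ := by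
      rw [Prod.dist_eq]; simp; exact huv
    have := hδ' hd
    rw [Real.dist_eq] at this
    have h1 : H (u, zv) ≤ H (v, zv) + ε / 2 := by
      have := abs_lt.1 this; linarith [this.2]
    calc (⨅ w, H (u, w)) ≤ H (u, zv) := ciInf_le (hbdd u) zv
      _ ≤ H (v, zv) + ε / 2 := h1
      _ = (⨅ w, H (v, w)) + ε / 2 := by rw [hzv]
  rw [Real.dist_eq, abs_lt]
  have h1 := key a b ha
  have h2 := key b a (by rw [dist_comm]; exact ha)
  constructor <;> linarith

theorem stmt6 {X Y : Type*}
    [MetricSpace X] [CompactSpace X] [MeasurableSpace X] [BorelSpace X]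
    [MetricSpace Y] [CompactSpace Y] [MeasurableSpace Y] [BorelSpace Y] [Nonempty Y]
    (μ : Measure X) [IsProbabilityMeasure μ]
    (c : X → Y → ℝ) (hc : Continuous fun p : X × Y => c p.1 p.2)
    (𝓕 : Measure Y → ℝ) (F : Measure Y → Y → ℝ)
    (hconv : ∀ (ν ρ : Measure Y), IsProbabilityMeasure ν → IsProbabilityMeasure ρ →
      ∀ t : ℝ, 0 ≤ t → t ≤ 1 →
        𝓕 (ENNReal.ofReal (1 - t) • ν + ENNReal.ofReal t • ρ) ≤ (1 - t) * 𝓕 ν + t * 𝓕 ρ)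
    (hFV : ∀ (ν ρ : Measure Y), IsProbabilityMeasure ν → IsProbabilityMeasure ρ →
      Tendsto (fun t : ℝ =>
          (𝓕 (ENNReal.ofReal (1 - t) • ν + ENNReal.ofReal t • ρ) - 𝓕 ν) / t)
        (𝓝[>] (0:ℝ))
        (𝓝 (∫ y, F ν y ∂ρ - ∫ y, F ν y ∂ν)))
    (Tc : Measure Y → ℝ)
    (hTc : ∀ ν : Measure Y, Tc ν = sInf {r : ℝ | ∃ γ : Measure (X × Y),
        γ.map Prod.fst = μ ∧ γ.map Prod.snd = ν ∧ r = ∫ p, c p.1 p.2 ∂γ})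
    (νs : Measure Y) [IsProbabilityMeasure νs]
    (hmin : ∀ ν : Measure Y, IsProbabilityMeasure ν → Tc νs + 𝓕 νs ≤ Tc ν + 𝓕 ν)
    (hFcont : Continuous (F νs))
    (γs : Measure (X × Y)) (hγ1 : γs.map Prod.fst = μ) (hγ2 : γs.map Prod.snd = νs)
    (hγopt : ∫ p, c p.1 p.2 ∂γs = Tc νs) :
    γs {p : X × Y | c p.1 p.2 + F νs p.2 = ⨅ z : Y, (c p.1 z + F νs z)} = 1 := by
  classical
  -- Basic setup
  have hXne : Nonempty X := by
    by_contra h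
    rw [not_nonempty_iff] at h
    have h1 : μ univ = 1 := measure_univ
    rw [Set.univ_eq_empty_iff.2 h, measure_empty] at h1
    simp at h1
  have hγprob : IsProbabilityMeasure γs := by
    constructor
    have : γs.map Prod.fst univ = 1 := by rw [hγ1]; exact measure_univ
    rwa [Measure.map_apply measurable_fst MeasurableSet.univ, preimage_univ] at this
  -- The total cost function and the value function
  set H : X × Y → ℝ := fun p => c p.1 p.2 + F νs p.2 with hH_def
  have hHcont : Continuous H := hc.add (hFcont.comp continuous_snd)
  set φ : X → ℝ := fun x => ⨅ z : Y, (c x z + F νs z) with hφ_def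
  have hφcont : Continuous φ := cn_cont_inf hHcont
  have hbdd : ∀ x : X, BddBelow (range fun z => c x z + F νs z) := by
    intro x
    obtain ⟨z0, -, hz0⟩ := isCompact_univ.exists_isMinOn univ_nonempty
      (hHcont.comp (Continuous.prodMk_right x)).continuousOn
    exact ⟨H (x, z0), by rintro r ⟨z, rfl⟩; exact isMinOn_iff.mp hz0 z trivial⟩
  have hφle : ∀ x z, φ x ≤ c x z + F νs z := fun x z => ciInf_le (hbdd x) z
  have hφattain : ∀ x : X, ∃ z : Y, φ x = c x z + F νs z := by
    intro x
    obtain ⟨z0, -, hz0⟩ := isCompact_univ.exists_isMinOn univ_nonempty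
      (hHcont.comp (Continuous.prodMk_right x)).continuousOn
    exact ⟨z0, le_antisymm (hφle x z0) (le_ciInf fun w => isMinOn_iff.mp hz0 w trivial)⟩
  -- key inequality against arbitrary couplings
  have key : ∀ (ρ : Measure Y), IsProbabilityMeasure ρ → ∀ γρ : Measure (X × Y),
      γρ.map Prod.fst = μ → γρ.map Prod.snd = ρ →
      Tc νs + ∫ y, F νs y ∂νs ≤ (∫ p, c p.1 p.2 ∂γρ) + ∫ y, F νs y ∂ρ := by
    intro ρ hρ γρ hρ1 hρ2
    set A := ∫ p, c p.1 p.2 ∂γρ with hA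
    have hγρprob : IsProbabilityMeasure γρ := by
      constructor
      have : γρ.map Prod.fst univ = 1 := by rw [hρ1]; exact measure_univ
      rwa [Measure.map_apply measurable_fst MeasurableSet.univ, preimage_univ] at this
    obtain ⟨pm, -, hpm⟩ := isCompact_univ.exists_isMinOn univ_nonempty hc.continuousOn
    set m := c pm.1 pm.2 with hm
    have hbddS : ∀ ν : Measure Y, BddBelow {r : ℝ | ∃ γ : Measure (X × Y),
        γ.map Prod.fst = μ ∧ γ.map Prod.snd = ν ∧ r = ∫ p, c p.1 p.2 ∂γ} := by
      intro ν
      refine ⟨m, ?_⟩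
      rintro r ⟨γ, hg1, hg2, rfl⟩
      have hgprob : IsProbabilityMeasure γ := by
        constructor
        have : γ.map Prod.fst univ = 1 := by rw [hg1]; exact measure_univ
        rwa [Measure.map_apply measurable_fst MeasurableSet.univ, preimage_univ] at this
      calc m = ∫ _p : X × Y, m ∂γ := by simp
        _ ≤ ∫ p, c p.1 p.2 ∂γ := integral_mono (integrable_const m) (cn_integrable γ hc)
            (fun p => isMinOn_iff.mp hpm p trivial)
    rw [show Tc νs + ∫ y, F νs y ∂νs ≤ A + ∫ y, F νs y ∂ρ ↔
        Tc νs - A ≤ (∫ y, F νs y ∂ρ) - ∫ y, F νs y ∂νs from by constructor <;> intro <;> linarith]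
    refine ge_of_tendsto (hFV νs ρ inferInstance hρ) ?_
    filter_upwards [Ioc_mem_nhdsGT_of_mem (Set.left_mem_Ico.2 one_pos)] with t ht
    have ht0 : (0:ℝ) < t := ht.1
    have ht1 : t ≤ 1 := ht.2
    have hνtprob : IsProbabilityMeasure (ENNReal.ofReal (1 - t) • νs + ENNReal.ofReal t • ρ) := by
      constructor
      simp only [Measure.add_apply, Measure.smul_apply, smul_eq_mul, measure_univ, mul_one]
      rw [← ENNReal.ofReal_add (by linarith) (le_of_lt ht0)]
      norm_num
    have hTcle : Tc (ENNReal.ofReal (1 - t) • νs + ENNReal.ofReal t • ρ)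
        ≤ (1 - t) * Tc νs + t * A := by
      rw [hTc]
      refine csInf_le (hbddS _) ?_
      refine ⟨ENNReal.ofReal (1 - t) • γs + ENNReal.ofReal t • γρ, ?_, ?_, ?_⟩
      · rw [Measure.map_add _ _ measurable_fst, Measure.map_smul, Measure.map_smul, hγ1, hρ1,
          ← add_smul, ← ENNReal.ofReal_add (by linarith) (le_of_lt ht0)]
        norm_num
      · rw [Measure.map_add _ _ measurable_snd, Measure.map_smul, Measure.map_smul, hγ2, hρ2]
      · rw [integral_add_measure ((cn_integrable γs hc).smul_measure ENNReal.ofReal_ne_top)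
            ((cn_integrable γρ hc).smul_measure ENNReal.ofReal_ne_top),
          integral_smul_measure, integral_smul_measure,
          ENNReal.toReal_ofReal (by linarith), ENNReal.toReal_ofReal (le_of_lt ht0),
          hγopt]
        simp [smul_eq_mul, hA]
    have h2 := hmin _ hνtprob
    rw [le_div_iff₀ ht0]
    nlinarith [hTcle, h2]
  -- key inequality against the value function
  have key2 : Tc νs + ∫ y, F νs y ∂νs ≤ ∫ x, φ x ∂μ := by
    refine le_of_forall_pos_le_add ?_
    intro ε hε
    obtain ⟨u, du⟩ := TopologicalSpace.exists_dense_seq Y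
    have hex : ∀ x : X, ∃ n : ℕ, c x (u n) + F νs (u n) < φ x + ε := by
      intro x
      obtain ⟨z0, hz0⟩ := hφattain x
      have hopen : IsOpen {z : Y | c x z + F νs z < φ x + ε} :=
        isOpen_lt (hHcont.comp (Continuous.prodMk_right x)) continuous_const
      have hne : {z : Y | c x z + F νs z < φ x + ε}.Nonempty :=
        ⟨z0, by simp only [mem_setOf_eq, ← hz0]; linarith⟩
      exact du.exists_mem_open hopen hne
    set T : X → Y := fun x => u (Nat.find (hex x)) with hT_def
    have hN : Measurable fun x => Nat.find (hex x) := by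
      refine measurable_find hex fun k => ?_
      exact measurableSet_lt
        ((hHcont.comp (continuous_id.prodMk continuous_const)).measurable)
        ((hφcont.add continuous_const).measurable)
    have hT : Measurable T := measurable_from_top.comp hN
    have hTspec : ∀ x, c x (T x) + F νs (T x) < φ x + ε := fun x => Nat.find_spec (hex x)
    have hρprob : IsProbabilityMeasure (μ.map T) := Measure.isProbabilityMeasure_map hT.aemeasurable
    have hgm : Measurable fun x => (x, T x) := measurable_id.prodMk hT
    have h1 : (μ.map fun x => (x, T x)).map Prod.fst = μ := by
      rw [Measure.map_map measurable_fst hgm]; exact Measure.map_id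
    have h2 : (μ.map fun x => (x, T x)).map Prod.snd = μ.map T := by
      rw [Measure.map_map measurable_snd hgm]; rfl
    have hkey := key (μ.map T) hρprob _ h1 h2
    have e1 : ∫ p, c p.1 p.2 ∂(μ.map fun x => (x, T x)) = ∫ x, c x (T x) ∂μ :=
      integral_map hgm.aemeasurable hc.aestronglyMeasurable
    have e2 : ∫ y, F νs y ∂(μ.map T) = ∫ x, F νs (T x) ∂μ :=
      integral_map hT.aemeasurable hFcont.aestronglyMeasurable
    -- integrability of the composed maps
    obtain ⟨pM, -, hpM⟩ := isCompact_univ.exists_isMaxOn univ_nonempty hc.abs.continuousOn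
    obtain ⟨yM, -, hyM⟩ := isCompact_univ.exists_isMaxOn univ_nonempty hFcont.abs.continuousOn
    have ic : Integrable (fun x => c x (T x)) μ := by
      refine Integrable.mono' (integrable_const |c pM.1 pM.2|)
        ((hc.measurable.comp hgm).aestronglyMeasurable) (ae_of_all _ fun x => ?_)
      exact isMaxOn_iff.mp hpM (x, T x) trivial
    have iF : Integrable (fun x => F νs (T x)) μ := by
      refine Integrable.mono' (integrable_const |F νs yM|)
        ((hFcont.measurable.comp hT).aestronglyMeasurable) (ae_of_all _ fun x => ?_)
      exact isMaxOn_iff.mp hyM (T x) trivial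
    have hφint : Integrable φ μ := cn_integrable μ hφcont
    calc Tc νs + ∫ y, F νs y ∂νs
        ≤ (∫ x, c x (T x) ∂μ) + ∫ x, F νs (T x) ∂μ := by rw [← e1, ← e2]; exact hkey
      _ = ∫ x, (c x (T x) + F νs (T x)) ∂μ := (integral_add ic iF).symm
      _ ≤ ∫ x, (φ x + ε) ∂μ :=
          integral_mono (ic.add iF) (hφint.add (integrable_const ε)) fun x => (hTspec x).le
      _ = (∫ x, φ x ∂μ) + ε := by
          rw [integral_add hφint (integrable_const ε), integral_const]
          simp
  -- conclude
  have eφ : ∫ x, φ x ∂μ = ∫ p, φ p.1 ∂γs := by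
    have h := integral_map (μ := γs) (φ := Prod.fst) measurable_fst.aemeasurable
      (f := φ) hφcont.aestronglyMeasurable
    rw [hγ1] at h
    exact h
  have eF : ∫ y, F νs y ∂νs = ∫ p, F νs p.2 ∂γs := by
    have h := integral_map (μ := γs) (φ := Prod.snd) measurable_snd.aemeasurable
      (f := F νs) hFcont.aestronglyMeasurable
    rw [hγ2] at h
    exact h
  have iH : Integrable H γs := cn_integrable γs hHcont
  have iφf : Integrable (fun p : X × Y => φ p.1) γs :=
    cn_integrable γs (hφcont.comp continuous_fst)
  have icγ : Integrable (fun p : X × Y => c p.1 p.2) γs := cn_integrable γs hc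
  have iFγ : Integrable (fun p : X × Y => F νs p.2) γs :=
    cn_integrable γs (hFcont.comp continuous_snd)
  have hle : ∫ p, H p ∂γs ≤ ∫ p, φ p.1 ∂γs := by
    calc ∫ p, H p ∂γs = (∫ p, c p.1 p.2 ∂γs) + ∫ p, F νs p.2 ∂γs := integral_add icγ iFγ
      _ = Tc νs + ∫ y, F νs y ∂νs := by rw [hγopt, eF]
      _ ≤ ∫ x, φ x ∂μ := key2
      _ = ∫ p, φ p.1 ∂γs := eφ
  have hg0 : ∀ p : X × Y, 0 ≤ H p - φ p.1 := fun p => sub_nonneg.2 (hφle p.1 p.2)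
  have hint0 : ∫ p, (H p - φ p.1) ∂γs = 0 := by
    refine le_antisymm ?_ (integral_nonneg hg0)
    rw [integral_sub iH iφf]; linarith
  have hae : (fun p : X × Y => H p - φ p.1) =ᵐ[γs] 0 :=
    (integral_eq_zero_iff_of_nonneg hg0 (iH.sub iφf)).1 hint0
  have hcompl : γs {p : X × Y | c p.1 p.2 + F νs p.2 = ⨅ z : Y, (c p.1 z + F νs z)}ᶜ = 0 := by
    have hset : {p : X × Y | c p.1 p.2 + F νs p.2 = ⨅ z : Y, (c p.1 z + F νs z)}ᶜ
        = {p : X × Y | ¬ (H p - φ p.1 = 0)} := by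
      ext p
      simp [hH_def, hφ_def, sub_eq_zero]
    rw [hset]
    exact ae_iff.1 hae
  refine le_antisymm prob_le_one ?_
  calc (1 : ℝ≥0∞) = γs univ := measure_univ.symm
    _ = γs ({p : X × Y | c p.1 p.2 + F νs p.2 = ⨅ z : Y, (c p.1 z + F νs z)} ∪
        {p : X × Y | c p.1 p.2 + F νs p.2 = ⨅ z : Y, (c p.1 z + F νs z)}ᶜ) := by
        rw [union_compl_self]
    _ ≤ _ + _ := measure_union_le _ _
    _ = γs {p : X × Y | c p.1 p.2 + F νs p.2 = ⨅ z : Y, (c p.1 z + F νs z)} := by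
        rw [hcompl, add_zero]
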